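/- Let A ⊆ D be a collection of dyadic intervals. Then for every κ > 0 there exists Ã ⊆ A such that for each k, the k-th generation G_k(Ã) is finite and contained in G_k(A), and |limsup(Ã)| ≥ |limsup(A)| − κ. -/

import Mathlib

open MeasureTheory Set

/-- Index set for dyadic intervals: `(j, i)` with `1 ≤ i ≤ 2^j` encodes
`[(i-1)/2^j, i/2^j) ⊆ [0,1)`. -/
def DIdx : Set (ℕ × ℕ) := {p | 1 ≤ p.2 ∧ p.2 ≤ 2 ^ p.1}

/-- The dyadic interval `[(i-1)/2^j, i/2^j)` encoded by `p = (j, i)`. -/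
def dIco (p : ℕ × ℕ) : Set ℝ :=
  Set.Ico (((p.2 : ℝ) - 1) / 2 ^ p.1) ((p.2 : ℝ) / 2 ^ p.1)

/-- Maximal elements (with respect to inclusion of the associated intervals)
of a collection of dyadic intervals. -/
def maxElems (A : Set (ℕ × ℕ)) : Set (ℕ × ℕ) :=
  {I | I ∈ A ∧ ∀ J ∈ A, dIco I ⊆ dIco J → I = J}

/-- Auxiliary recursion: the `n`-th generation and the remainder after removing
generations `0, …, n`. -/
def genAux (A : Set (ℕ × ℕ)) : ℕ → Set (ℕ × ℕ) × Set (ℕ × ℕ)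
  | 0 => (maxElems A, A \ maxElems A)
  | n + 1 => (maxElems (genAux A n).2, (genAux A n).2 \ maxElems (genAux A n).2)

/-- `gen A n = 𝒢ₙ(A)`, the `n`-th generation of `A`: maximal elements of `A` after
removal of the earlier generations. -/
def gen (A : Set (ℕ × ℕ)) (n : ℕ) : Set (ℕ × ℕ) := (genAux A n).1

/-- `𝒢ₙ(A)* = ⋃ 𝒢ₙ(A)`, the pointset of the `n`-th generation. -/
def genStar (A : Set (ℕ × ℕ)) (n : ℕ) : Set ℝ := ⋃ I ∈ gen A n, dIco I

/-- `limsup A = ⋂ₙ 𝒢ₙ(A)*`. -/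
def limsupSet (A : Set (ℕ × ℕ)) : Set ℝ := ⋂ n, genStar A n

/-! ### Basic facts about dyadic intervals -/

lemma dIco_nonempty (p : ℕ × ℕ) : (dIco p).Nonempty := by
  refine nonempty_Ico.2 ?_
  gcongr
  linarith

lemma dIco_inj : Function.Injective dIco := by
  rintro ⟨j, i⟩ ⟨j', i'⟩ h
  simp only [dIco] at h
  have h1 : (0:ℝ) < 2 ^ j := by positivity
  have h1' : (0:ℝ) < 2 ^ j' := by positivity
  have hne : ((i:ℝ) - 1) / 2 ^ j < (i:ℝ) / 2 ^ j := by gcongr; linarith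
  rw [Set.Ico_eq_Ico_iff (Or.inl hne)] at h
  obtain ⟨ha, hb⟩ := h
  rw [div_eq_div_iff h1.ne' h1'.ne'] at ha hb
  have hjj : (2:ℝ) ^ j = 2 ^ j' := by nlinarith
  have hj : j = j' := by
    have : (2:ℕ) ^ j = 2 ^ j' := by exact_mod_cast hjj
    exact Nat.pow_right_injective (le_refl 2) this
  subst hj
  have : (i:ℝ) = i' := by
    have := mul_right_cancel₀ (ne_of_gt h1) hb
    exact_mod_cast this
  have : i = i' := by exact_mod_cast this
  simp [this]

lemma dIco_subset_unit {p : ℕ × ℕ} (hp : p ∈ DIdx) : dIco p ⊆ Ico (0:ℝ) 1 := by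
  obtain ⟨hp1, hp2⟩ := hp
  have h1 : (0:ℝ) < 2 ^ p.1 := by positivity
  apply Ico_subset_Ico
  · apply div_nonneg _ h1.le
    have : (1:ℝ) ≤ p.2 := by exact_mod_cast hp1
    linarith
  · rw [div_le_one h1]
    exact_mod_cast hp2

lemma dIco_subset_of_le {j i j' i' : ℕ} (hi : 1 ≤ i) (hi' : 1 ≤ i') (hj : j ≤ j')
    (h : (dIco (j, i) ∩ dIco (j', i')).Nonempty) : dIco (j', i') ⊆ dIco (j, i) := by
  obtain ⟨x, ⟨hx1, hx2⟩, ⟨hx3, hx4⟩⟩ := h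
  simp only [dIco] at *
  have h1 : (0:ℝ) < 2 ^ j := by positivity
  have h1' : (0:ℝ) < 2 ^ j' := by positivity
  set d := j' - j with hd
  have hpow : (2:ℝ) ^ j' = 2 ^ j * 2 ^ d := by
    rw [← pow_add]
    congr 1
    omega
  have hdpos : (0:ℝ) < 2 ^ d := by positivity
  have r1 : (i':ℝ) - 1 < (i:ℝ) * 2 ^ d := by
    have : ((i':ℝ) - 1) / 2 ^ j' < (i:ℝ) / 2 ^ j := lt_of_le_of_lt hx3 hx2
    rw [div_lt_div_iff₀ h1' h1] at this
    nlinarith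
  have r2 : ((i:ℝ) - 1) * 2 ^ d < (i':ℝ) := by
    have : ((i:ℝ) - 1) / 2 ^ j < (i':ℝ) / 2 ^ j' := lt_of_le_of_lt hx1 hx4
    rw [div_lt_div_iff₀ h1 h1'] at this
    nlinarith
  have n1 : i' - 1 < i * 2 ^ d := by
    have : ((i' - 1 : ℕ) : ℝ) < ((i * 2 ^ d : ℕ) : ℝ) := by
      rw [Nat.cast_sub hi']
      push_cast
      exact r1
    exact_mod_cast this
  have n2 : (i - 1) * 2 ^ d < i' := by
    have : (((i - 1) * 2 ^ d : ℕ) : ℝ) < ((i' : ℕ) : ℝ) := by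
      rw [Nat.cast_mul, Nat.cast_sub hi]
      push_cast
      exact r2
    exact_mod_cast this
  have n1' : i' ≤ i * 2 ^ d := by omega
  have n2' : (i - 1) * 2 ^ d ≤ i' - 1 := by omega
  apply Ico_subset_Ico
  · rw [div_le_div_iff₀ h1 h1']
    have : (((i - 1) * 2 ^ d : ℕ) : ℝ) ≤ ((i' - 1 : ℕ) : ℝ) := by exact_mod_cast n2'
    rw [Nat.cast_mul, Nat.cast_sub hi, Nat.cast_sub hi'] at this
    push_cast at this
    nlinarith
  · rw [div_le_div_iff₀ h1' h1]
    have : ((i' : ℕ) : ℝ) ≤ ((i * 2 ^ d : ℕ) : ℝ) := by exact_mod_cast n1'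
    push_cast at this
    nlinarith

lemma dIco_dichotomy {p q : ℕ × ℕ} (hp : p ∈ DIdx) (hq : q ∈ DIdx)
    (h : (dIco p ∩ dIco q).Nonempty) : dIco p ⊆ dIco q ∨ dIco q ⊆ dIco p := by
  obtain ⟨j, i⟩ := p
  obtain ⟨j', i'⟩ := q
  rcases le_total j j' with hj | hj
  · exact Or.inr (dIco_subset_of_le hp.1 hq.1 hj h)
  · exact Or.inl (dIco_subset_of_le hq.1 hp.1 hj (by rwa [Set.inter_comm] at h))

/-! ### Structure of generations -/

/-- Remainder after removing generations `0,…,n-1`. -/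
def rem (A : Set (ℕ × ℕ)) : ℕ → Set (ℕ × ℕ)
  | 0 => A
  | n + 1 => rem A n \ maxElems (rem A n)

lemma genAux_eq (A : Set (ℕ × ℕ)) (n : ℕ) :
    genAux A n = (maxElems (rem A n), rem A (n + 1)) := by
  induction n with
  | zero => rfl
  | succ n ih => simp [genAux, ih, rem]

lemma gen_eq_maxElems (A : Set (ℕ × ℕ)) (n : ℕ) : gen A n = maxElems (rem A n) := by
  rw [gen, genAux_eq]

lemma rem_antitone (A : Set (ℕ × ℕ)) : ∀ {n m : ℕ}, n ≤ m → rem A m ⊆ rem A n := by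
  intro n m h
  induction m with
  | zero => simp_all
  | succ m ih =>
    rcases Nat.lt_or_ge n (m + 1) with h' | h'
    · exact (Set.diff_subset).trans (ih (by omega))
    · have : n = m + 1 := by omega
      subst this; rfl

lemma gen_subset_rem (A : Set (ℕ × ℕ)) (n : ℕ) : gen A n ⊆ rem A n := by
  rw [gen_eq_maxElems]; exact fun I hI => hI.1

lemma gen_subset (A : Set (ℕ × ℕ)) (n : ℕ) : gen A n ⊆ A :=
  (gen_subset_rem A n).trans (rem_antitone A (Nat.zero_le n))

lemma gen_level_eq {A : Set (ℕ × ℕ)} {I : ℕ × ℕ} {n m : ℕ}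
    (hn : I ∈ gen A n) (hm : I ∈ gen A m) : n = m := by
  by_contra h
  wlog hlt : n < m generalizing n m
  · exact this hm hn (Ne.symm h) (by omega)
  have h1 : I ∈ rem A m := gen_subset_rem A m hm
  have h2 : I ∈ rem A (n + 1) := rem_antitone A hlt h1
  rw [gen_eq_maxElems] at hn
  exact h2.2 hn

lemma gen_level_le {A : Set (ℕ × ℕ)} {I J : ℕ × ℕ} {n m : ℕ}
    (hI : I ∈ gen A n) (hJ : J ∈ gen A m) (h : dIco I ⊆ dIco J) : m ≤ n := by
  by_contra hc
  push_neg at hc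
  have hJ' : J ∈ rem A n := rem_antitone A hc.le (gen_subset_rem A m hJ)
  have hI' := hI
  rw [gen_eq_maxElems] at hI'
  have hIJ := hI'.2 J hJ' h
  subst hIJ
  exact absurd (gen_level_eq hI hJ) (by omega)

lemma gen_eq_of_subset' {A : Set (ℕ × ℕ)} {I J : ℕ × ℕ} {n : ℕ}
    (hI : I ∈ gen A n) (hJ : J ∈ gen A n) (h : dIco I ⊆ dIco J) : I = J := by
  rw [gen_eq_maxElems] at hI
  exact hI.2 J (gen_subset_rem A n hJ) h

/-! ### Generations of a nested family -/

section Family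
variable {A : Set (ℕ × ℕ)} {F : ℕ → Set (ℕ × ℕ)}
  (hF : ∀ n, F n ⊆ gen A n)
  (hchain : ∀ n, ∀ I ∈ F (n + 1), ∃ J ∈ F n, dIco I ⊆ dIco J)

include hchain in
lemma chain_iter : ∀ d n, ∀ I ∈ F (n + d), ∃ J ∈ F n, dIco I ⊆ dIco J := by
  intro d
  induction d with
  | zero => exact fun n I hI => ⟨I, hI, subset_rfl⟩
  | succ d ih =>
    intro n I hI
    obtain ⟨J, hJ, hIJ⟩ := hchain (n + d) I hI
    obtain ⟨K, hK, hJK⟩ := ih n J hJ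
    exact ⟨K, hK, hIJ.trans hJK⟩

include hF hchain in
lemma maxElems_tail (n : ℕ) : maxElems (⋃ m, ⋃ (_ : n ≤ m), F m) = F n := by
  ext I
  constructor
  · rintro ⟨hI, hmax⟩
    simp only [mem_iUnion] at hI
    obtain ⟨m, hnm, hIm⟩ := hI
    obtain ⟨d, rfl⟩ := Nat.exists_eq_add_of_le hnm
    obtain ⟨J, hJ, hIJ⟩ := chain_iter hchain d n I hIm
    have hJU : J ∈ ⋃ m, ⋃ (_ : n ≤ m), F m := by
      simp only [mem_iUnion]; exact ⟨n, le_rfl, hJ⟩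
    have := hmax J hJU hIJ
    subst this
    exact hJ
  · intro hI
    refine ⟨by simp only [mem_iUnion]; exact ⟨n, le_rfl, hI⟩, ?_⟩
    intro J hJ hIJ
    simp only [mem_iUnion] at hJ
    obtain ⟨m, hnm, hJm⟩ := hJ
    have hmn : m ≤ n := gen_level_le (hF n hI) (hF m hJm) hIJ
    have : m = n := le_antisymm hmn hnm
    subst this
    exact gen_eq_of_subset' (hF m hI) (hF m hJm) hIJ

include hF in
lemma tail_diff (n : ℕ) :
    (⋃ m, ⋃ (_ : n ≤ m), F m) \ F n = ⋃ m, ⋃ (_ : n + 1 ≤ m), F m := by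
  ext I
  simp only [mem_diff, mem_iUnion]
  constructor
  · rintro ⟨⟨m, hnm, hIm⟩, hIn⟩
    refine ⟨m, ?_, hIm⟩
    rcases Nat.lt_or_ge n m with h | h
    · omega
    · exfalso; apply hIn
      have : m = n := by omega
      subst this; exact hIm
  · rintro ⟨m, hnm, hIm⟩
    refine ⟨⟨m, by omega, hIm⟩, fun hIn => ?_⟩
    have := gen_level_eq (hF m hIm) (hF n hIn)
    omega

include hF hchain in
lemma genAux_family (n : ℕ) :
    genAux (⋃ m, F m) n = (F n, ⋃ m, ⋃ (_ : n + 1 ≤ m), F m) := by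
  have hU0 : (⋃ m, F m) = ⋃ m, ⋃ (_ : 0 ≤ m), F m := by simp
  induction n with
  | zero =>
    show (maxElems (⋃ m, F m), (⋃ m, F m) \ maxElems (⋃ m, F m)) = _
    rw [hU0, maxElems_tail hF hchain, ← hU0]
    rw [show (⋃ m, F m) \ F 0 = (⋃ m, ⋃ (_ : 0 ≤ m), F m) \ F 0 by rw [← hU0]]
    rw [tail_diff hF 0]
  | succ n ih =>
    show (maxElems (genAux (⋃ m, F m) n).2, _) = _
    rw [ih]
    simp only
    rw [maxElems_tail hF hchain (n + 1), tail_diff hF (n + 1)]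

include hF hchain in
lemma gen_family (n : ℕ) : gen (⋃ m, F m) n = F n := by
  rw [gen, genAux_family hF hchain]

end Family

/-! ### Finite approximation of countable unions -/

lemma exists_finite_approx (C : Set (ℕ × ℕ)) (ε : ℝ) :
    ∃ F : Set (ℕ × ℕ), F ⊆ C ∧ F.Finite ∧ (C ⊆ DIdx → 0 < ε →
      volume ((⋃ I ∈ C, dIco I) \ ⋃ I ∈ F, dIco I) ≤ ENNReal.ofReal ε) := by
  rcases C.eq_empty_or_nonempty with rfl | hCne
  · exact ⟨∅, subset_rfl, finite_empty, fun _ _ => by simp⟩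
  obtain ⟨f, rfl⟩ := (Set.to_countable _).exists_eq_range hCne
  set S : Set ℝ := ⋃ I ∈ range f, dIco I with hS
  set T : ℕ → Set ℝ := fun n => ⋃ I ∈ f '' Iic n, dIco I with hT
  by_cases hmain : range f ⊆ DIdx ∧ 0 < ε
  swap
  · refine ⟨f '' Iic 0, image_subset_range f _, (finite_Iic 0).image f, fun h1 h2 => ?_⟩
    exact absurd ⟨h1, h2⟩ hmain
  obtain ⟨hC, hε⟩ := hmain
  have hTmono : Monotone T := by
    intro a b hab
    apply biUnion_subset_biUnion_left
    exact image_mono (Iic_subset_Iic.2 hab)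
  have hTS : ∀ n, T n ⊆ S := fun n =>
    biUnion_subset_biUnion_left (image_subset_range f _)
  have hUnion : ⋃ n, T n = S := by
    apply Set.Subset.antisymm (iUnion_subset hTS)
    rintro x hx
    simp only [hS, mem_iUnion, mem_range] at hx
    obtain ⟨I, ⟨k, rfl⟩, hxI⟩ := hx
    exact mem_iUnion.2 ⟨k, mem_iUnion₂.2 ⟨f k, ⟨k, self_mem_Iic, rfl⟩, hxI⟩⟩
  have hSsub : S ⊆ Ico (0:ℝ) 1 := by
    apply iUnion₂_subset
    exact fun I hI => dIco_subset_unit (hC hI)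
  have hSfin : volume S ≠ ⊤ := by
    apply ne_top_of_le_ne_top _ (measure_mono hSsub)
    simp [Real.volume_Ico]
  have hTmeas : ∀ n, MeasurableSet (T n) := by
    intro n
    apply Set.Finite.measurableSet_biUnion ((finite_Iic n).image f)
    exact fun I _ => measurableSet_Ico
  have hsup : volume S = ⨆ n, volume (T n) := by
    rw [← hUnion]
    exact hTmono.directed_le.measure_iUnion
  have key : ∃ n, volume S ≤ volume (T n) + ENNReal.ofReal ε := by
    rcases le_or_gt (volume S) (ENNReal.ofReal ε) with h | h
    · exact ⟨0, h.trans le_add_self⟩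
    have hS0 : volume S ≠ 0 := by
      intro h0
      rw [h0] at h
      exact absurd h (by simp)
    have hlt : volume S - ENNReal.ofReal ε < volume S :=
      ENNReal.sub_lt_self hSfin hS0 (ENNReal.ofReal_pos.2 hε).ne'
    obtain ⟨n, hn⟩ := lt_iSup_iff.1 (hlt.trans_le hsup.le)
    refine ⟨n, ?_⟩
    calc volume S = volume S - ENNReal.ofReal ε + ENNReal.ofReal ε := by
          rw [tsub_add_cancel_of_le h.le]
      _ ≤ volume (T n) + ENNReal.ofReal ε := add_le_add_left hn.le _
  obtain ⟨n, hn⟩ := key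
  refine ⟨f '' Iic n, image_subset_range f _, (finite_Iic n).image f, fun _ _ => ?_⟩
  have hdiff : volume (S \ T n) = volume S - volume (T n) :=
    measure_diff (hTS n) (hTmeas n).nullMeasurableSet
      (ne_top_of_le_ne_top hSfin (measure_mono (hTS n)))
  rw [show (⋃ I ∈ range f, dIco I) \ ⋃ I ∈ f '' Iic n, dIco I = S \ T n from rfl, hdiff]
  exact tsub_le_iff_left.2 hn

noncomputable def pickF (C : Set (ℕ × ℕ)) (ε : ℝ) : Set (ℕ × ℕ) :=
  (exists_finite_approx C ε).choose

lemma pickF_subset (C : Set (ℕ × ℕ)) (ε : ℝ) : pickF C ε ⊆ C :=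
  (exists_finite_approx C ε).choose_spec.1

lemma pickF_finite (C : Set (ℕ × ℕ)) (ε : ℝ) : (pickF C ε).Finite :=
  (exists_finite_approx C ε).choose_spec.2.1

lemma pickF_vol {C : Set (ℕ × ℕ)} {ε : ℝ} (hC : C ⊆ DIdx) (hε : 0 < ε) :
    volume ((⋃ I ∈ C, dIco I) \ ⋃ I ∈ pickF C ε, dIco I) ≤ ENNReal.ofReal ε :=
  (exists_finite_approx C ε).choose_spec.2.2 hC hε

/-! ### The selected family -/

noncomputable def famF (A : Set (ℕ × ℕ)) (κ : ℝ) : ℕ → Set (ℕ × ℕ)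
  | 0 => pickF (gen A 0) (κ / 2 / 2 ^ 0)
  | n + 1 => pickF {I | I ∈ gen A (n + 1) ∧ dIco I ⊆ ⋃ J ∈ famF A κ n, dIco J}
      (κ / 2 / 2 ^ (n + 1))

noncomputable def famC (A : Set (ℕ × ℕ)) (κ : ℝ) : ℕ → Set (ℕ × ℕ)
  | 0 => gen A 0
  | n + 1 => {I | I ∈ gen A (n + 1) ∧ dIco I ⊆ ⋃ J ∈ famF A κ n, dIco J}

lemma famF_eq (A : Set (ℕ × ℕ)) (κ : ℝ) (n : ℕ) :
    famF A κ n = pickF (famC A κ n) (κ / 2 / 2 ^ n) := by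
  cases n <;> rfl

lemma famC_subset_gen (A : Set (ℕ × ℕ)) (κ : ℝ) (n : ℕ) : famC A κ n ⊆ gen A n := by
  cases n
  · exact subset_rfl
  · exact fun I hI => hI.1

lemma famF_subset_gen (A : Set (ℕ × ℕ)) (κ : ℝ) (n : ℕ) : famF A κ n ⊆ gen A n := by
  rw [famF_eq]
  exact (pickF_subset _ _).trans (famC_subset_gen A κ n)

lemma famF_chain {A : Set (ℕ × ℕ)} (hA : A ⊆ DIdx) (κ : ℝ) (n : ℕ) :
    ∀ I ∈ famF A κ (n + 1), ∃ J ∈ famF A κ n, dIco I ⊆ dIco J := by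
  intro I hI
  have hI' : I ∈ famC A κ (n + 1) := by
    rw [famF_eq] at hI
    exact pickF_subset _ _ hI
  obtain ⟨hIgen, hIsub⟩ := hI'
  obtain ⟨x, hx⟩ := dIco_nonempty I
  obtain ⟨J, hJ, hxJ⟩ := mem_iUnion₂.1 (hIsub hx)
  have hJgen : J ∈ gen A n := famF_subset_gen A κ n hJ
  rcases dIco_dichotomy (hA (gen_subset A _ hIgen)) (hA (gen_subset A _ hJgen))
      ⟨x, hx, hxJ⟩ with h | h
  · exact ⟨J, hJ, h⟩
  · exfalso
    have := gen_level_le hJgen hIgen h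
    omega

/-! ### Main theorem -/

theorem stmt_11 (A : Set (ℕ × ℕ)) (hA : A ⊆ DIdx) (κ : ℝ) (hκ : 0 < κ) :
    ∃ B ⊆ A, (∀ k, (gen B k).Finite ∧ gen B k ⊆ gen A k) ∧
      volume (limsupSet A) ≤ volume (limsupSet B) + ENNReal.ofReal κ := by
  classical
  set F : ℕ → Set (ℕ × ℕ) := famF A κ with hFdef
  have hFgen : ∀ n, F n ⊆ gen A n := famF_subset_gen A κ
  have hchain : ∀ n, ∀ I ∈ F (n + 1), ∃ J ∈ F n, dIco I ⊆ dIco J := famF_chain hA κ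
  set B : Set (ℕ × ℕ) := ⋃ m, F m with hBdef
  have hBA : B ⊆ A := iUnion_subset fun m => (hFgen m).trans (gen_subset A m)
  have hgenB : ∀ k, gen B k = F k := gen_family hFgen hchain
  refine ⟨B, hBA, fun k => ?_, ?_⟩
  · rw [hgenB k]
    exact ⟨by rw [hFdef, famF_eq]; exact pickF_finite _ _, hFgen k⟩
  -- measure estimate
  set S : ℕ → Set ℝ := fun n => ⋃ I ∈ F n, dIco I with hSdef
  have hlimB : limsupSet B = ⋂ n, S n := by
    unfold limsupSet
    exact iInter_congr fun n => by rw [genStar, hgenB n]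
  set E : ℕ → Set ℝ := fun n => (⋃ I ∈ famC A κ n, dIco I) \ S n with hEdef
  have hεpos : ∀ n : ℕ, 0 < κ / 2 / 2 ^ n := fun n => by positivity
  have hEvol : ∀ n, volume (E n) ≤ ENNReal.ofReal (κ / 2 / 2 ^ n) := by
    intro n
    have hCD : famC A κ n ⊆ DIdx := (famC_subset_gen A κ n).trans ((gen_subset A n).trans hA)
    have := pickF_vol hCD (hεpos n)
    rw [hEdef]
    simp only
    rw [show S n = ⋃ I ∈ pickF (famC A κ n) (κ / 2 / 2 ^ n), dIco I by
      rw [hSdef]; simp only; rw [hFdef, famF_eq]]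
    exact this
  have hcover : limsupSet A ⊆ (⋂ n, S n) ∪ ⋃ n, E n := by
    intro x hx
    by_cases hxS : x ∈ ⋂ n, S n
    · exact Or.inl hxS
    right
    have hex : ∃ n, x ∉ S n := by simpa [mem_iInter] using hxS
    have hxA : ∀ n, x ∈ genStar A n := fun n => mem_iInter.1 hx n
    rcases hn : Nat.find hex with _ | m
    · -- first failure at 0
      refine mem_iUnion.2 ⟨0, ?_, ?_⟩
      · have : x ∈ genStar A 0 := hxA 0
        rwa [show (⋃ I ∈ famC A κ 0, dIco I) = genStar A 0 from rfl]
      · have := Nat.find_spec hex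
        rwa [hn] at this
    · have hxSm : x ∈ S m := by
        by_contra hc
        have h2 : Nat.find hex ≤ m := Nat.find_le hc
        omega
      have hxnot : x ∉ S (m + 1) := by
        have := Nat.find_spec hex
        rwa [hn] at this
      obtain ⟨I, hIgen, hxI⟩ := mem_iUnion₂.1 (hxA (m + 1))
      obtain ⟨J, hJ, hxJ⟩ := mem_iUnion₂.1 hxSm
      have hJgen : J ∈ gen A m := hFgen m hJ
      have hsub : dIco I ⊆ dIco J := by
        rcases dIco_dichotomy (hA (gen_subset A _ hIgen)) (hA (gen_subset A _ hJgen))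
            ⟨x, hxI, hxJ⟩ with h | h
        · exact h
        · exfalso
          have := gen_level_le hJgen hIgen h
          omega
      have hIC : I ∈ famC A κ (m + 1) :=
        ⟨hIgen, hsub.trans (subset_biUnion_of_mem (u := fun J => dIco J) hJ)⟩
      exact mem_iUnion.2 ⟨m + 1, mem_iUnion₂.2 ⟨I, hIC, hxI⟩, hxnot⟩
  have hsum : ∑' n : ℕ, ENNReal.ofReal (κ / 2 / 2 ^ n) = ENNReal.ofReal κ := by
    rw [← ENNReal.ofReal_tsum_of_nonneg (fun n => (hεpos n).le) (summable_geometric_two' κ),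
      tsum_geometric_two']
  calc volume (limsupSet A) ≤ volume ((⋂ n, S n) ∪ ⋃ n, E n) := measure_mono hcover
    _ ≤ volume (⋂ n, S n) + volume (⋃ n, E n) := measure_union_le _ _
    _ ≤ volume (⋂ n, S n) + ∑' n, volume (E n) := by gcongr; exact measure_iUnion_le E
    _ ≤ volume (limsupSet B) + ENNReal.ofReal κ := by
        rw [hlimB, ← hsum]
        exact add_le_add_right (ENNReal.tsum_le_tsum hEvol) _
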